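/- Let A be an abelian group such that A/pA and the p-torsion subgroup {a ∈ A | pa = 0} are both finite. Then the ℤ/p-completion Â_{ℤ/p} = lim A/p^i A is a finitely generated ℤ_p-module. -/

import Mathlib

/-- The subgroup `pA = {x | ∃ a, p • a = x}` of an abelian group `A`. -/
def pMul (p : ℕ) (A : Type) [AddCommGroup A] : AddSubgroup A where
  carrier := {x | ∃ a : A, p • a = x}
  zero_mem' := ⟨0, smul_zero p⟩
  add_mem' := by rintro _ _ ⟨a, rfl⟩ ⟨b, rfl⟩; exact ⟨a + b, smul_add p a b⟩
  neg_mem' := by rintro _ ⟨a, rfl⟩; exact ⟨-a, smul_neg p a⟩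

/-- The `p`-torsion subgroup `{a ∈ A | p • a = 0}`. -/
def pTor (p : ℕ) (A : Type) [AddCommGroup A] : AddSubgroup A where
  carrier := {x | p • x = 0}
  zero_mem' := smul_zero p
  add_mem' := by
    intro a b ha hb
    show p • (a + b) = 0
    rw [smul_add, ha, hb, add_zero]
  neg_mem' := by
    intro a ha
    show p • (-a) = 0
    rw [smul_neg, ha, neg_zero]

open Submodule Pointwise

variable {A : Type} [AddCommGroup A]

theorem AdicCompletion.transitionMap_mk {R M : Type*} [CommRing R] [AddCommGroup M] [Module R M]
    (I : Ideal R) {m n : ℕ} (hmn : m ≤ n) (x : M) :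
    AdicCompletion.transitionMap I M hmn (Submodule.Quotient.mk x) = Submodule.Quotient.mk x := rfl

theorem AdicCompletion.transitionMap_comp_apply {R : Type*} [CommRing R] (I : Ideal R) (M' : Type*) [AddCommGroup M'] [Module R M'] {k l m : ℕ}
    (hkl : k ≤ l) (hlm : l ≤ m) (x : M' ⧸ (I ^ m • ⊤ : Submodule R M')) :
    AdicCompletion.transitionMap I M' hkl (AdicCompletion.transitionMap I M' hlm x) =
      AdicCompletion.transitionMap I M' (hkl.trans hlm) x := by
  obtain ⟨a, rfl⟩ := Submodule.Quotient.mk_surjective _ x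
  rfl

theorem mem_spanp_smul_top (p : ℤ) (x : A) :
    x ∈ (Ideal.span {p} • ⊤ : Submodule ℤ A) ↔ ∃ a : A, p • a = x := by
  rw [Submodule.ideal_span_singleton_smul, ← SetLike.mem_coe, Submodule.coe_pointwise_smul]
  constructor
  · intro h
    obtain ⟨a, -, rfl⟩ := Set.mem_smul_set.mp h
    exact ⟨a, rfl⟩
  · rintro ⟨a, rfl⟩
    exact Set.smul_mem_smul_set trivial

theorem mem_pow_smul_top (p : ℤ) (n : ℕ) (x : A) :
    x ∈ ((Ideal.span {p}) ^ n • ⊤ : Submodule ℤ A) ↔ ∃ a : A, p ^ n • a = x := by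
  rw [Ideal.span_singleton_pow]
  exact mem_spanp_smul_top (p ^ n) x

theorem fin_of_hom {M N : Type*} [AddCommGroup M] [AddCommGroup N] (f : M →+ N)
    [Finite N] (hk : Finite f.ker) : Finite M := by
  have : Finite (M ⧸ f.ker) := Finite.of_injective _ (QuotientAddGroup.quotientKerEquivRange f).injective
  exact Finite.of_equiv _ (AddSubgroup.addGroupEquivQuotientProdAddSubgroup (s := f.ker)).symm

theorem fin_quot_one (p : ℕ) (h1 : Finite (A ⧸ pMul p A)) :
    Finite (A ⧸ (Ideal.span {(p : ℤ)} • ⊤ : Submodule ℤ A)) := by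
  have h : ∀ x ∈ pMul p A,
      (Submodule.mkQ (Ideal.span {(p : ℤ)} • ⊤ : Submodule ℤ A)).toAddMonoidHom x = 0 := by
    rintro x ⟨a, rfl⟩
    simp only [LinearMap.toAddMonoidHom_coe, mkQ_apply]
    rw [Submodule.Quotient.mk_eq_zero]
    exact (mem_spanp_smul_top _ _).mpr ⟨a, natCast_zsmul a p⟩
  apply Finite.of_surjective (QuotientAddGroup.lift (pMul p A) _ h)
  intro y
  obtain ⟨a, rfl⟩ := Submodule.Quotient.mk_surjective _ y
  exact ⟨QuotientAddGroup.mk a, rfl⟩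

theorem fin_quot_pow (p : ℕ) (h1 : Finite (A ⧸ pMul p A)) (n : ℕ) :
    Finite (A ⧸ ((Ideal.span {(p : ℤ)}) ^ n • ⊤ : Submodule ℤ A)) := by
  set I : Ideal ℤ := Ideal.span {(p : ℤ)} with hI
  induction n with
  | zero =>
    have : (I ^ 0 • ⊤ : Submodule ℤ A) = ⊤ := by rw [pow_zero, Ideal.one_eq_top, top_smul]
    have : Subsingleton (A ⧸ (I ^ 0 • ⊤ : Submodule ℤ A)) :=
      Submodule.Quotient.subsingleton_iff.mpr this
    infer_instance
  | succ n ih =>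
    set ψ := AdicCompletion.transitionMap I A (Nat.le_succ n) with hψ
    have : Finite (A ⧸ (I ^ n • ⊤ : Submodule ℤ A)) := ih
    apply fin_of_hom ψ.toAddMonoidHom
    -- the kernel is finite, being a surjective image of A ⧸ I•⊤
    have hmem : ∀ a : A, (Submodule.mkQ (I ^ (n+1) • ⊤ : Submodule ℤ A) ∘ₗ
        (((p : ℤ) ^ n) • LinearMap.id)) a ∈ LinearMap.ker ψ := by
      intro a
      simp only [LinearMap.mem_ker, LinearMap.comp_apply, LinearMap.smul_apply,
        LinearMap.id_coe, id_eq, mkQ_apply, hψ, AdicCompletion.transitionMap_mk]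
      rw [Submodule.Quotient.mk_eq_zero]
      exact (mem_pow_smul_top _ _ _).mpr ⟨a, rfl⟩
    set f₁ := LinearMap.codRestrict (LinearMap.ker ψ) _ hmem with hf₁
    have hker : (I • ⊤ : Submodule ℤ A) ≤ LinearMap.ker f₁ := by
      intro x hx
      obtain ⟨b, rfl⟩ := (mem_spanp_smul_top _ _).mp hx
      rw [LinearMap.mem_ker]
      apply Subtype.ext
      simp only [hf₁, LinearMap.codRestrict_apply, LinearMap.comp_apply, LinearMap.smul_apply,
        LinearMap.id_coe, id_eq, mkQ_apply, ZeroMemClass.coe_zero]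
      rw [Submodule.Quotient.mk_eq_zero]
      refine (mem_pow_smul_top _ _ _).mpr ⟨b, ?_⟩
      rw [pow_succ, mul_smul]
    have : Finite (A ⧸ (I • ⊤ : Submodule ℤ A)) := fin_quot_one p h1
    have hsurj : Function.Surjective (Submodule.liftQ _ f₁ hker) := by
      rintro ⟨y, hy⟩
      obtain ⟨a, rfl⟩ := Submodule.Quotient.mk_surjective _ y
      rw [LinearMap.mem_ker] at hy
      rw [hψ, AdicCompletion.transitionMap_mk, Submodule.Quotient.mk_eq_zero] at hy
      obtain ⟨b, rfl⟩ := (mem_pow_smul_top _ _ _).mp hy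
      refine ⟨Submodule.Quotient.mk b, ?_⟩
      apply Subtype.ext
      simp only [hf₁, Submodule.liftQ_apply, LinearMap.codRestrict_apply, LinearMap.comp_apply,
        LinearMap.smul_apply, LinearMap.id_coe, id_eq, mkQ_apply, Submodule.Quotient.mk_smul]
    have : Finite (LinearMap.ker ψ) := Finite.of_surjective _ hsurj
    -- transfer to AddMonoidHom kernel
    exact Finite.of_injective
      (fun x : ψ.toAddMonoidHom.ker => (⟨x.1, x.2⟩ : LinearMap.ker ψ))
      (fun a b h => Subtype.ext (congrArg Subtype.val h))

open CategoryTheory AdicCompletion in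
theorem exists_psmul (p : ℕ) (h1 : Finite (A ⧸ pMul p A))
    (y : AdicCompletion (Ideal.span {(p : ℤ)}) A) (hy : y.val 1 = 0) :
    ∃ z : AdicCompletion (Ideal.span {(p : ℤ)}) A, (p : ℤ) • z = y := by
  let T : ℕ → Type := fun n =>
    {z : A ⧸ ((Ideal.span {(p : ℤ)}) ^ (n + 1) • ⊤ : Submodule ℤ A) //
      (p : ℤ) • z = y.val (n + 1)}
  let f : ∀ n : ℕ, T (n + 1) → T n := fun n z =>
    ⟨transitionMap (Ideal.span {(p : ℤ)}) A (Nat.succ_le_succ (Nat.le_succ n)) z.1, by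
      rw [← map_smul, z.2, y.property (Nat.succ_le_succ (Nat.le_succ n))]⟩
  let F : ℕᵒᵖ ⥤ Type := Functor.ofOpSequence (fun n => TypeCat.ofHom (f n))
  have hfin : ∀ j : ℕᵒᵖ, Finite (F.obj j) := by
    intro j
    have : Finite (A ⧸ ((Ideal.span {(p : ℤ)}) ^ (j.unop + 1) • ⊤ : Submodule ℤ A)) :=
      fin_quot_pow p h1 _
    exact Subtype.finite
  have hne : ∀ j : ℕᵒᵖ, Nonempty (F.obj j) := by
    intro j
    obtain ⟨a, ha⟩ := Submodule.Quotient.mk_surjective _ (y.val (j.unop + 1))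
    have h0 : transitionMap (Ideal.span {(p : ℤ)}) A
        (Nat.one_le_iff_ne_zero.mpr (Nat.succ_ne_zero j.unop)) (y.val (j.unop + 1))
        = y.val 1 := y.property _
    rw [← ha, transitionMap_mk, hy, Submodule.Quotient.mk_eq_zero, pow_one] at h0
    obtain ⟨b, hb⟩ := (mem_spanp_smul_top _ _).mp h0
    exact ⟨⟨Submodule.Quotient.mk b, by rw [← Submodule.Quotient.mk_smul, hb, ha]⟩⟩
  obtain ⟨u, hu⟩ := nonempty_sections_of_finite_inverse_system F
  have hstep : ∀ n : ℕ, f n (u (Opposite.op (n + 1))) = u (Opposite.op n) := by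
    intro n
    have := hu ((homOfLE (Nat.le_add_right n 1)).op)
    rwa [Functor.ofOpSequence_map_homOfLE_succ] at this
  have hchain : ∀ m n : ℕ, (h : m ≤ n) →
      transitionMap (Ideal.span {(p : ℤ)}) A (Nat.succ_le_succ h) (u (Opposite.op n)).1
        = (u (Opposite.op m)).1 := by
    intro m n h
    induction n, h using Nat.le_induction with
    | base => simp
    | succ n h ih =>
      have hs : transitionMap (Ideal.span {(p : ℤ)}) A (Nat.succ_le_succ (Nat.le_succ n))
          (u (Opposite.op (n + 1))).1 = (u (Opposite.op n)).1 :=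
        congrArg Subtype.val (hstep n)
      rw [← transitionMap_comp_apply (Ideal.span {(p : ℤ)}) A (Nat.succ_le_succ h) (Nat.succ_le_succ (Nat.le_succ n)),
        hs, ih]
  refine ⟨⟨fun n => transitionMap (Ideal.span {(p : ℤ)}) A (Nat.le_succ n)
    (u (Opposite.op n)).1, ?_⟩, ?_⟩
  · intro m n hmn
    rw [transitionMap_comp_apply,
      ← transitionMap_comp_apply (Ideal.span {(p : ℤ)}) A (Nat.le_succ m) (Nat.succ_le_succ hmn), hchain m n hmn]
  · apply AdicCompletion.ext
    intro n
    show (p : ℤ) • transitionMap (Ideal.span {(p : ℤ)}) A (Nat.le_succ n)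
      (u (Opposite.op n)).1 = y.val n
    rw [← map_smul, (u (Opposite.op n)).2, y.property (Nat.le_succ n)]

open AdicCompletion in
theorem main_thm (p : ℕ) (hp : p.Prime) (h1 : Finite (A ⧸ pMul p A)) :
    Module.Finite (AdicCompletion (Ideal.span {(p : ℤ)}) ℤ)
      (AdicCompletion (Ideal.span {(p : ℤ)}) A) := by
  classical
  have hfin1 : Finite (A ⧸ ((Ideal.span {(p : ℤ)}) ^ 1 • ⊤ : Submodule ℤ A)) :=
    fin_quot_pow p h1 1
  have hmodfin : Module.Finite ℤ (A ⧸ ((Ideal.span {(p : ℤ)}) ^ 1 • ⊤ : Submodule ℤ A)) :=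
    Module.Finite.of_finite
  obtain ⟨m, g, hg⟩ := Module.Finite.exists_fin
    (R := ℤ) (M := A ⧸ ((Ideal.span {(p : ℤ)}) ^ 1 • ⊤ : Submodule ℤ A))
  -- lift the generators
  have hv : ∀ i, ∃ a : A, Submodule.Quotient.mk a = g i :=
    fun i => Submodule.Quotient.mk_surjective _ (g i)
  set v : Fin m → A := fun i => (hv i).choose with hvdef
  have hvspec : ∀ i, Submodule.Quotient.mk (v i) = g i := fun i => (hv i).choose_spec
  set x : Fin m → AdicCompletion (Ideal.span {(p : ℤ)}) A :=
    fun i => AdicCompletion.of (Ideal.span {(p : ℤ)}) A (v i) with hxdef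
  -- step: every element is a ℤ-combination of the x i plus p times something
  have claim1 : ∀ y : AdicCompletion (Ideal.span {(p : ℤ)}) A,
      ∃ cz : (Fin m → ℤ) × AdicCompletion (Ideal.span {(p : ℤ)}) A,
        y = (∑ i, cz.1 i • x i) + (p : ℤ) • cz.2 := by
    intro y
    have h1mem : y.val 1 ∈ Submodule.span ℤ (Set.range g) := by rw [hg]; trivial
    obtain ⟨c, hc⟩ := mem_span_range_iff_exists_fun ℤ |>.mp h1mem
    have hy' : (y - ∑ i, c i • x i).val 1 = 0 := by
      rw [AdicCompletion.val_sub_apply, AdicCompletion.val_sum_apply]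
      have : ∀ i, ((c i • x i).val 1) = c i • g i := by
        intro i
        rw [AdicCompletion.val_smul_apply, hxdef]
        show c i • Submodule.Quotient.mk (v i) = c i • g i
        rw [hvspec]
      rw [Finset.sum_congr rfl (fun i _ => this i), hc, sub_self]
    obtain ⟨z, hz⟩ := exists_psmul p h1 _ hy'
    exact ⟨(c, z), by rw [hz]; abel⟩
  have step : ∀ y : AdicCompletion (Ideal.span {(p : ℤ)}) A,
      {cz : (Fin m → ℤ) × AdicCompletion (Ideal.span {(p : ℤ)}) A //
        y = (∑ i, cz.1 i • x i) + (p : ℤ) • cz.2} :=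
    fun y => Classical.indefiniteDescription _ (claim1 y)
  -- show every y is in the span
  have main : ∀ y : AdicCompletion (Ideal.span {(p : ℤ)}) A,
      y ∈ Submodule.span (AdicCompletion (Ideal.span {(p : ℤ)}) ℤ) (Set.range x) := by
    intro y
    set zseq : ℕ → AdicCompletion (Ideal.span {(p : ℤ)}) A :=
      fun k => Nat.rec y (fun _ zk => (step zk).1.2) k with hzseq
    set c : ℕ → Fin m → ℤ := fun k => (step (zseq k)).1.1 with hcdef
    have hrec : ∀ k, zseq k = (∑ i, c k i • x i) + (p : ℤ) • zseq (k + 1) :=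
      fun k => (step (zseq k)).2
    set T : ℕ → Fin m → ℤ := fun n i => ∑ k ∈ Finset.range n, (p : ℤ) ^ k * c k i with hT
    have key : ∀ n, y = (∑ i, T n i • x i) + ((p : ℤ) ^ n) • zseq n := by
      intro n
      induction n with
      | zero =>
        show y = _ + (1 : ℤ) • y
        simp [hT]
      | succ n ih =>
        rw [ih, hrec n, smul_add, Finset.smul_sum]
        have e1 : ∀ i, (p : ℤ) ^ n • (c n i • x i) = ((p : ℤ) ^ n * c n i) • x i := by
          intro i; rw [smul_smul]
        have e2 : (p : ℤ) ^ n • ((p : ℤ) • zseq (n + 1))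
            = ((p : ℤ) ^ (n + 1)) • zseq (n + 1) := by
          rw [smul_smul, ← pow_succ]
        rw [Finset.sum_congr rfl (fun i _ => e1 i), e2, ← add_assoc, ← Finset.sum_add_distrib]
        congr 1
        refine Finset.sum_congr rfl (fun i _ => ?_)
        rw [← add_smul]
        congr 1
        simp only [hT]
        rw [Finset.sum_range_succ]
    -- the p-adic coefficients
    have scompat : ∀ i : Fin m, ∀ {a b : ℕ} (hab : a ≤ b),
        transitionMap (Ideal.span {(p : ℤ)}) ℤ hab
          (Submodule.Quotient.mk (T b i)) = Submodule.Quotient.mk (T a i) := by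
      intro i a b hab
      rw [AdicCompletion.transitionMap_mk]
      rw [Submodule.Quotient.eq]
      refine (mem_pow_smul_top _ _ _).mpr ⟨∑ k ∈ Finset.Ico a b, (p : ℤ) ^ (k - a) * c k i, ?_⟩
      rw [hT, smul_eq_mul, Finset.mul_sum, ← Finset.sum_Ico_eq_sub _ hab]
      refine Finset.sum_congr rfl (fun k hk => ?_)
      rw [← mul_assoc, ← pow_add, Nat.add_sub_cancel' (Finset.mem_Ico.mp hk).1]
    set s : Fin m → AdicCompletion (Ideal.span {(p : ℤ)}) ℤ :=
      fun i => ⟨fun n => Submodule.Quotient.mk (T n i), fun {a b} hab => scompat i hab⟩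
      with hsdef
    have hy : y = ∑ i, s i • x i := by
      apply AdicCompletion.ext
      intro n
      have hzero : ((p : ℤ) ^ n • zseq n).val n = 0 := by
        rw [AdicCompletion.val_smul_apply]
        obtain ⟨a, ha⟩ := Submodule.Quotient.mk_surjective _ ((zseq n).val n)
        rw [← ha, ← Submodule.Quotient.mk_smul, Submodule.Quotient.mk_eq_zero]
        exact (mem_pow_smul_top _ _ _).mpr ⟨a, rfl⟩
      rw [key n, AdicCompletion.val_add_apply, hzero, add_zero, AdicCompletion.val_sum_apply,
        AdicCompletion.val_sum_apply]
      refine Finset.sum_congr rfl (fun i _ => ?_)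
      rw [AdicCompletion.val_smul_apply]
      rw [AdicCompletion.smul_eval]
      show T n i • (x i).val n = (s i).val n • (x i).val n
      have : (s i).val n = Submodule.Quotient.mk (T n i) := rfl
      rw [this]
      obtain ⟨w, hw⟩ := Submodule.Quotient.mk_surjective _ ((x i).val n)
      rw [← hw]
      exact (AdicCompletion.mk_smul_mk _ _ _).symm
    rw [hy]
    exact Submodule.sum_mem _ (fun i _ =>
      Submodule.smul_mem _ _ (Submodule.subset_span (Set.mem_range_self i)))
  constructor
  refine ⟨Finset.univ.image x, ?_⟩
  rw [Finset.coe_image, Finset.coe_univ, Set.image_univ]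
  exact Submodule.eq_top_iff'.mpr main

/-- if `A/pA` and the `p`-torsion of `A` are finite, then the `ℤ/p`-completion
`Â = lim A/p^i A` (the `(p)`-adic completion of `A` as a `ℤ`-module) is a finitely generated
module over the ring of `p`-adic integers (realized as the `(p)`-adic completion of `ℤ`). -/
theorem bousfield_stmt16 (p : ℕ) (hp : p.Prime) (A : Type) [AddCommGroup A]
    (h1 : Finite (A ⧸ pMul p A)) (h2 : Finite (pTor p A)) :
    Module.Finite (AdicCompletion (Ideal.span {(p : ℤ)}) ℤ)
      (AdicCompletion (Ideal.span {(p : ℤ)}) A) := by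
  exact main_thm p hp h1
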